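/- Let G be an n-vertex graph such that α₁(G) + τ(G) > n²/4 while every proper induced subgraph H of G satisfies α₁(H) + τ(H) ≤ |V(H)|²/4. Then the minimum degree of G satisfies δ(G) > n/2. -/

import Mathlib

open Finset

/-- `A` is a triangle-independent set of edges of `G`: it consists of edges of `G`
and contains at most one edge from each triangle of `G`. -/
def TriIndep {V : Type*} (G : SimpleGraph V) (A : Finset (Sym2 V)) : Prop :=
  (A : Set (Sym2 V)) ⊆ G.edgeSet ∧
    ∀ x y z : V, G.Adj x y → G.Adj y z → G.Adj x z →
      ¬(s(x, y) ∈ A ∧ s(y, z) ∈ A)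

/-- `α₁ G`: the maximum size of a triangle-independent set of edges of `G`. -/
noncomputable def alpha1 {V : Type*} [Fintype V] (G : SimpleGraph V) : ℕ :=
  sSup {k | ∃ A : Finset (Sym2 V), TriIndep G A ∧ A.card = k}

/-- `τ G`: the minimum size of a set of edges whose deletion makes `G` triangle-free. -/
noncomputable def tau {V : Type*} [Fintype V] (G : SimpleGraph V) : ℕ :=
  sInf {k | ∃ X : Finset (Sym2 V), (X : Set (Sym2 V)) ⊆ G.edgeSet ∧
    (G.deleteEdges (X : Set (Sym2 V))).CliqueFree 3 ∧ X.card = k}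

/-- `τ_B G`: the minimum size of a set of edges whose deletion makes `G` bipartite. -/
noncomputable def tauB {V : Type*} [Fintype V] (G : SimpleGraph V) : ℕ :=
  sInf {k | ∃ X : Finset (Sym2 V), (X : Set (Sym2 V)) ⊆ G.edgeSet ∧
    (G.deleteEdges (X : Set (Sym2 V))).Colorable 2 ∧ X.card = k}

open scoped Classical in
/-- The edge cut `[S, S̄]`: the set of edges of `G` with one endpoint in `S`
and the other outside `S`. -/
noncomputable def edgeCut {V : Type*} [Fintype V] (G : SimpleGraph V) (S : Finset V) :
    Finset (Sym2 V) :=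
  G.edgeFinset.filter (fun e => ∃ x ∈ S, ∃ y ∉ S, e = s(x, y))

open scoped Classical in
/-- The number of edges of `G`. -/
noncomputable def edgeCount {V : Type*} [Fintype V] (G : SimpleGraph V) : ℕ :=
  G.edgeFinset.card

/-- The independence number of `G`. -/
noncomputable def indepNum {V : Type*} [Fintype V] (G : SimpleGraph V) : ℕ :=
  sSup {k | ∃ I : Finset V, (∀ x ∈ I, ∀ y ∈ I, ¬G.Adj x y) ∧ I.card = k}

/-- `K₄⁻`: the complete graph on 4 vertices with one edge deleted. -/
def K4minus : SimpleGraph (Fin 4) := (SimpleGraph.completeGraph (Fin 4)).deleteEdges {s(0, 1)}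

section aux
variable {V : Type*} [Fintype V] (G : SimpleGraph V)

lemma alpha1_exists : ∃ A : Finset (Sym2 V), TriIndep G A ∧ A.card = alpha1 G := by
  classical
  have hne : ({k | ∃ A : Finset (Sym2 V), TriIndep G A ∧ A.card = k}).Nonempty :=
    ⟨0, ∅, ⟨by simp, fun x y z _ _ _ h => by simp at h⟩, rfl⟩
  have hbdd : BddAbove {k | ∃ A : Finset (Sym2 V), TriIndep G A ∧ A.card = k} := by
    refine ⟨Fintype.card (Sym2 V), ?_⟩
    rintro k ⟨A, _, rfl⟩
    exact A.card_le_univ.trans_eq (by simp)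
  obtain ⟨A, hA, hcard⟩ := Nat.sSup_mem hne hbdd
  exact ⟨A, hA, hcard⟩

lemma alpha1_ge {A : Finset (Sym2 V)} (hA : TriIndep G A) : A.card ≤ alpha1 G := by
  classical
  have hbdd : BddAbove {k | ∃ A : Finset (Sym2 V), TriIndep G A ∧ A.card = k} := by
    refine ⟨Fintype.card (Sym2 V), ?_⟩
    rintro k ⟨A, _, rfl⟩
    exact A.card_le_univ.trans_eq (by simp)
  exact le_csSup hbdd ⟨A, hA, rfl⟩

lemma tau_exists : ∃ X : Finset (Sym2 V), (X : Set (Sym2 V)) ⊆ G.edgeSet ∧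
    (G.deleteEdges (X : Set (Sym2 V))).CliqueFree 3 ∧ X.card = tau G := by
  classical
  have hne : ({k | ∃ X : Finset (Sym2 V), (X : Set (Sym2 V)) ⊆ G.edgeSet ∧
      (G.deleteEdges (X : Set (Sym2 V))).CliqueFree 3 ∧ X.card = k}).Nonempty := by
    refine ⟨G.edgeFinset.card, G.edgeFinset, by simp, ?_, rfl⟩
    have : G.deleteEdges (G.edgeFinset : Set (Sym2 V)) = ⊥ := by
      ext a b
      simp
    rw [this]
    exact SimpleGraph.cliqueFree_bot (by norm_num)
  exact Nat.sInf_mem hne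

lemma tau_le {X : Finset (Sym2 V)} (h1 : (X : Set (Sym2 V)) ⊆ G.edgeSet)
    (h2 : (G.deleteEdges (X : Set (Sym2 V))).CliqueFree 3) : tau G ≤ X.card :=
  Nat.sInf_le ⟨X, h1, h2, rfl⟩

end aux

open scoped Classical in
/-- If `G` is a minimal counterexample to the Erdős–Gallai–Tuza conjecture, then its
minimum degree exceeds `n/2`: every vertex has degree greater than `n/2`. -/
theorem stmt2 {V : Type*} [Fintype V] (G : SimpleGraph V) (n : ℕ)
    (hn : Fintype.card V = n)
    (hctx : (alpha1 G + tau G : ℝ) > n ^ 2 / 4)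
    (hmin : ∀ S : Finset V, S ≠ Finset.univ →
      (alpha1 (G.induce (S : Set V)) + tau (G.induce (S : Set V)) : ℝ) ≤
        (S.card : ℝ) ^ 2 / 4) :
    ∀ v : V, (G.degree v : ℝ) > n / 2 := by
  intro v
  -- the punctured vertex set
  set S : Finset V := Finset.univ.erase v with hS
  have hvS : v ∉ S := Finset.notMem_erase v _
  have hSne : S ≠ Finset.univ := fun h => hvS (h ▸ Finset.mem_univ v)
  have hScard : S.card = n - 1 := by
    rw [hS, Finset.card_erase_of_mem (Finset.mem_univ v), Finset.card_univ, hn]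
  have hn1 : 1 ≤ n := hn ▸ Fintype.card_pos_iff.2 ⟨v⟩
  set H := G.induce (S : Set V) with hH
  have hmem : ∀ x : V, x ≠ v → x ∈ (S : Set V) := by
    intro x hx
    simp [hS, hx]
  -- the lifting map
  set f : Sym2 (↥(S : Set V)) → Sym2 V := Sym2.map (Subtype.val) with hf
  have hfinj : Function.Injective f := Sym2.map.injective Subtype.val_injective
  -- max triangle-independent set A
  obtain ⟨A, ⟨hAsub, hAtri⟩, hAcard⟩ := alpha1_exists G
  set N := G.neighborFinset v with hN
  set J := N.filter (fun x => s(v, x) ∈ A) with hJ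
  -- J is independent
  have hJindep : ∀ x ∈ J, ∀ y ∈ J, ¬ G.Adj x y := by
    intro x hx y hy hxy
    rw [hJ, Finset.mem_filter] at hx hy
    have hxv : G.Adj x v := ((G.mem_neighborFinset v x).1 hx.1).symm
    have hvy : G.Adj v y := (G.mem_neighborFinset v y).1 hy.1
    exact hAtri x v y hxv hvy hxy ⟨by rw [Sym2.eq_swap]; exact hx.2, hy.2⟩
  -- split A
  set Av := A.filter (fun e => v ∈ e) with hAv
  set A' := A.filter (fun e => ¬ v ∈ e) with hA'
  have hsplit : Av.card + A'.card = A.card :=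
    Finset.card_filter_add_card_filter_not (fun e => v ∈ e)
  -- Av has card J
  have hadjJ : ∀ x ∈ J, G.Adj v x := fun x hx =>
    (G.mem_neighborFinset v x).1 (Finset.mem_filter.1 hx).1
  have hJcard : J.card = Av.card := by
    apply Finset.card_bij (fun x _ => s(v, x))
    · intro x hx
      rw [hAv, Finset.mem_filter]
      exact ⟨(Finset.mem_filter.1 hx).2, Sym2.mem_mk_left v x⟩
    · intro x hx y hy hxy
      rcases Sym2.eq_iff.1 hxy with ⟨_, h⟩ | ⟨h1, h2⟩
      · exact h
      · exact absurd h2.symm (hadjJ x hx).ne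
    · intro e he
      rw [hAv, Finset.mem_filter] at he
      obtain ⟨w, rfl⟩ := Sym2.mem_iff_exists.1 he.2
      have hw : G.Adj v w := (G.mem_edgeSet).1 (hAsub he.1)
      refine ⟨w, ?_, rfl⟩
      rw [hJ, Finset.mem_filter]
      exact ⟨(G.mem_neighborFinset v w).2 hw, he.1⟩
  -- lift A' into H
  set A'' : Finset (Sym2 (↥(S : Set V))) := Finset.univ.filter (fun e => f e ∈ A') with hA''
  have hA''img : A''.image f = A' := by
    apply Finset.Subset.antisymm
    · intro e he
      obtain ⟨e', he', rfl⟩ := Finset.mem_image.1 he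
      exact (Finset.mem_filter.1 he').2
    · intro e he
      have hve : v ∉ e := (Finset.mem_filter.1 he).2
      have heA : e ∈ A := (Finset.mem_filter.1 he).1
      induction e with
      | _ a b =>
        have ha : a ∈ (S : Set V) := hmem a (fun h => hve (h ▸ Sym2.mem_mk_left a b))
        have hb : b ∈ (S : Set V) := hmem b (fun h => hve (h ▸ Sym2.mem_mk_right a b))
        refine Finset.mem_image.2 ⟨s(⟨a, ha⟩, ⟨b, hb⟩), ?_, ?_⟩
        · rw [hA'', Finset.mem_filter]
          refine ⟨Finset.mem_univ _, ?_⟩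
          rw [hf, Sym2.map_pair_eq]
          exact he
        · rw [hf, Sym2.map_pair_eq]
  have hA''card : A''.card = A'.card := by
    rw [← hA''img, Finset.card_image_of_injective _ hfinj]
  -- A'' is triangle-independent in H
  have hA''tri : TriIndep H A'' := by
    constructor
    · intro e he
      have := (Finset.mem_filter.1 he).2
      induction e with
      | _ a b =>
        rw [hH, SimpleGraph.mem_edgeSet]
        have h1 : f s(a, b) ∈ A' := (Finset.mem_filter.1 (Finset.mem_coe.1 he)).2
        have h2 : f s(a, b) ∈ A := (Finset.mem_filter.1 h1).1
        have h3 := hAsub h2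
        rw [hf, Sym2.map_pair_eq] at h3
        exact (G.mem_edgeSet).1 h3
    · intro x y z hxy hyz hxz ⟨h1, h2⟩
      have hxy' : G.Adj ↑x ↑y := hxy
      have hyz' : G.Adj ↑y ↑z := hyz
      have hxz' : G.Adj ↑x ↑z := hxz
      have m1 : s((x:V), (y:V)) ∈ A := by
        have := (Finset.mem_filter.1 h1).2
        rw [hf, Sym2.map_pair_eq] at this
        exact (Finset.mem_filter.1 this).1
      have m2 : s((y:V), (z:V)) ∈ A := by
        have := (Finset.mem_filter.1 h2).2
        rw [hf, Sym2.map_pair_eq] at this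
        exact (Finset.mem_filter.1 this).1
      exact hAtri ↑x ↑y ↑z hxy' hyz' hxz' ⟨m1, m2⟩
  -- alpha1 bound
  have halpha : alpha1 G ≤ alpha1 H + J.card := by
    calc alpha1 G = A.card := hAcard.symm
    _ = Av.card + A'.card := hsplit.symm
    _ = A'.card + J.card := by rw [hJcard]; ring
    _ ≤ alpha1 H + J.card := by
        have := alpha1_ge H hA''tri
        rw [hA''card] at this
        omega
  -- tau bound
  obtain ⟨X'', hX''sub, hX''free, hX''card⟩ := tau_exists H
  set X : Finset (Sym2 V) := X''.image f ∪ (N \ J).image (fun x => s(v, x)) with hX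
  have hXsub : (X : Set (Sym2 V)) ⊆ G.edgeSet := by
    intro e he
    rw [Finset.mem_coe, hX, Finset.mem_union] at he
    rcases he with he | he
    · obtain ⟨e', he', rfl⟩ := Finset.mem_image.1 he
      have := hX''sub (Finset.mem_coe.2 he')
      induction e' with
      | _ a b =>
        rw [hf, Sym2.map_pair_eq, SimpleGraph.mem_edgeSet]
        rw [SimpleGraph.mem_edgeSet] at this
        exact this
    · obtain ⟨x, hx, rfl⟩ := Finset.mem_image.1 he
      rw [SimpleGraph.mem_edgeSet]
      exact (G.mem_neighborFinset v x).1 (Finset.mem_sdiff.1 hx).1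
  have hXfree : (G.deleteEdges (X : Set (Sym2 V))).CliqueFree 3 := by
    intro t ht
    obtain ⟨a, b, c, hab, hac, hbc, rfl⟩ := SimpleGraph.is3Clique_iff.1 ht
    -- helper: an edge inside S that survives lifts
    have hsurv : ∀ (a b : V) (ha : a ∈ (S : Set V)) (hb : b ∈ (S : Set V)),
        (G.deleteEdges (X : Set (Sym2 V))).Adj a b →
        (H.deleteEdges (X'' : Set (Sym2 (↥(S : Set V))))).Adj ⟨a, ha⟩ ⟨b, hb⟩ := by
      intro a b ha hb h
      rw [SimpleGraph.deleteEdges_adj] at h ⊢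
      refine ⟨h.1, fun hmem' => h.2 ?_⟩
      rw [Finset.mem_coe, hX, Finset.mem_union]
      left
      refine Finset.mem_image.2 ⟨s(⟨a, ha⟩, ⟨b, hb⟩), hmem', ?_⟩
      rw [hf, Sym2.map_pair_eq]
    -- helper: edges at v that survive land in J
    have hvJ : ∀ x : V, (G.deleteEdges (X : Set (Sym2 V))).Adj v x → x ∈ J := by
      intro x h
      rw [SimpleGraph.deleteEdges_adj] at h
      have hxN : x ∈ N := (G.mem_neighborFinset v x).2 h.1
      by_contra hxJ
      apply h.2
      rw [Finset.mem_coe, hX, Finset.mem_union]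
      right
      exact Finset.mem_image.2 ⟨x, Finset.mem_sdiff.2 ⟨hxN, hxJ⟩, rfl⟩
    by_cases hav : a = v
    · subst hav
      have hb : b ∈ J := hvJ b hab
      have hc : c ∈ J := hvJ c hac
      exact hJindep b hb c hc hbc.1
    · by_cases hbv : b = v
      · subst hbv
        have ha : a ∈ J := hvJ a hab.symm
        have hc : c ∈ J := hvJ c hbc
        exact hJindep a ha c hc hac.1
      · by_cases hcv : c = v
        · subst hcv
          have ha : a ∈ J := hvJ a hac.symm
          have hb : b ∈ J := hvJ b hbc.symm
          exact hJindep a ha b hb hab.1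
        · have ha := hmem a hav
          have hb := hmem b hbv
          have hc := hmem c hcv
          exact hX''free {⟨a, ha⟩, ⟨b, hb⟩, ⟨c, hc⟩}
            (SimpleGraph.is3Clique_triple_iff.2
              ⟨hsurv a b ha hb hab, hsurv a c ha hc hac, hsurv b c hb hc hbc⟩)
  have hXcard : X.card ≤ tau H + (N \ J).card := by
    calc X.card ≤ (X''.image f).card + ((N \ J).image (fun x => s(v, x))).card :=
          Finset.card_union_le _ _
    _ ≤ X''.card + (N \ J).card := by
        gcongr <;> exact Finset.card_image_le
    _ = tau H + (N \ J).card := by rw [hX''card]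
  have htau : tau G ≤ tau H + (N \ J).card :=
    le_trans (tau_le G hXsub hXfree) hXcard
  -- cards
  have hJN : J ⊆ N := Finset.filter_subset _ _
  have hNcard : (N \ J).card + J.card = N.card :=
    Finset.card_sdiff_add_card_eq_card hJN
  have hdeg : N.card = G.degree v := rfl
  -- arithmetic conclusion
  have hsum : alpha1 G + tau G ≤ alpha1 H + tau H + G.degree v := by omega
  have hb : (alpha1 H + tau H : ℝ) ≤ ((n - 1 : ℕ) : ℝ) ^ 2 / 4 := by
    have := hmin S hSne
    rw [hScard] at this
    exact_mod_cast this
  have hbn : 4 * (alpha1 H + tau H) ≤ (n - 1) ^ 2 := by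
    have h4 : (4 : ℝ) * ((alpha1 H + tau H : ℕ) : ℝ) ≤ ((n - 1 : ℕ) : ℝ) ^ 2 := by
      push_cast at hb ⊢
      linarith
    exact_mod_cast h4
  have han : n ^ 2 < 4 * (alpha1 G + tau G) := by
    have h4 : ((n : ℕ) : ℝ) ^ 2 < (4 : ℝ) * ((alpha1 G + tau G : ℕ) : ℝ) := by
      push_cast at hctx ⊢
      linarith
    exact_mod_cast h4
  -- now pure nat arithmetic: prove 2 * degree ≥ n + 1
  have key : n + 1 ≤ 2 * G.degree v := by
    clear hctx hmin hb hScard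
    obtain ⟨m, rfl⟩ : ∃ m, n = m + 1 := ⟨n - 1, by omega⟩
    have hbn' : 4 * (alpha1 H + tau H) ≤ m ^ 2 := by simpa using hbn
    have han' : m ^ 2 + 2 * m + 1 < 4 * (alpha1 G + tau G) := by
      have hsq : (m + 1) ^ 2 = m ^ 2 + 2 * m + 1 := by ring
      rw [hsq] at han
      exact han
    have hmod : m ^ 2 % 2 = m % 2 := by
      conv_lhs => rw [Nat.pow_mod]
      rcases Nat.mod_two_eq_zero_or_one m with h | h <;> rw [h]
    omega
  rw [gt_iff_lt, div_lt_iff₀ (by norm_num : (0:ℝ) < 2)]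
  have : (n : ℝ) < 2 * (G.degree v : ℝ) := by exact_mod_cast Nat.lt_of_succ_le key
  linarith
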